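/- For every multi-index k = (k₁,...,kₙ) ∈ ℕ₀ⁿ and every real q ≥ 1, Γ(|k|/(nq) + 1)^(nq) ≤ k!, where |k| = k₁+...+kₙ and k! = k₁!···kₙ!. -/

import Mathlib

open Finset

lemma q_log_gamma_le (m : ℕ) (q : ℝ) (hq : 1 ≤ q) :
    q * Real.log (Real.Gamma ((m : ℝ) / q + 1)) ≤ Real.log (Nat.factorial m) := by
  have hq0 : 0 < q := lt_of_lt_of_le one_pos hq
  have h := Real.convexOn_log_Gamma.2
    (show ((m : ℝ) + 1) ∈ Set.Ioi (0:ℝ) from Set.mem_Ioi.2 (by positivity))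
    (show (1:ℝ) ∈ Set.Ioi (0:ℝ) from Set.mem_Ioi.2 one_pos)
    (show (0:ℝ) ≤ 1 / q from by positivity)
    (show (0:ℝ) ≤ 1 - 1 / q from by
      rw [sub_nonneg]; exact div_le_one_of_le₀ hq hq0.le)
    (show 1 / q + (1 - 1 / q) = 1 from by ring)
  have hx : (1 / q) • ((m : ℝ) + 1) + (1 - 1 / q) • (1 : ℝ) = (m : ℝ) / q + 1 := by
    simp only [smul_eq_mul]
    field_simp
    ring
  rw [hx] at h
  simp only [Function.comp, Real.Gamma_one, Real.log_one, smul_eq_mul, mul_zero, add_zero] at h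
  have hfac : Real.Gamma ((m : ℝ) + 1) = Nat.factorial m := by
    exact_mod_cast Real.Gamma_nat_eq_factorial m
  rw [hfac] at h
  calc q * Real.log (Real.Gamma ((m : ℝ) / q + 1))
      ≤ q * (1 / q * Real.log (Nat.factorial m)) :=
        mul_le_mul_of_nonneg_left h hq0.le
    _ = Real.log (Nat.factorial m) := by field_simp

/-- For a multi-index `k ∈ ℕ₀ⁿ` and `q ≥ 1`: `Γ(|k|/(nq) + 1)^(nq) ≤ k!`. -/
theorem gamma_pow_le_multi_factorial (n : ℕ) (hn : 1 ≤ n) (k : Fin n → ℕ) (q : ℝ)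
    (hq : 1 ≤ q) :
    Real.Gamma ((∑ i, k i : ℕ) / ((n : ℝ) * q) + 1) ^ ((n : ℝ) * q)
      ≤ (∏ i, Nat.factorial (k i) : ℕ) := by
  have hq0 : 0 < q := lt_of_lt_of_le one_pos hq
  have hn0 : (0 : ℝ) < n := by exact_mod_cast hn
  set x : ℝ := (∑ i, k i : ℕ) / ((n : ℝ) * q) + 1 with hxdef
  have hxpos : 0 < x := by positivity
  have hΓpos : 0 < Real.Gamma x := Real.Gamma_pos_of_pos hxpos
  have hjen := Real.convexOn_log_Gamma.map_sum_le (t := Finset.univ)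
    (w := fun _ : Fin n => 1 / (n : ℝ)) (p := fun i => (k i : ℝ) / q + 1)
    (fun i _ => by positivity)
    (by rw [Finset.sum_const, Finset.card_univ, Fintype.card_fin, nsmul_eq_mul]; field_simp)
    (fun i _ => by simp only [Set.mem_Ioi]; positivity)
  have hsum : ∑ i, (1 / (n : ℝ)) • ((k i : ℝ) / q + 1) = x := by
    simp only [smul_eq_mul]
    rw [← Finset.mul_sum]
    have h1 : ∑ i, ((k i : ℝ) / q + 1) = (∑ i, (k i : ℝ)) / q + n := by
      rw [Finset.sum_add_distrib, Finset.sum_div]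
      simp
    rw [h1, hxdef]
    push_cast
    field_simp
  rw [hsum] at hjen
  have hlog : (n : ℝ) * q * Real.log (Real.Gamma x)
      ≤ Real.log ((∏ i, Nat.factorial (k i) : ℕ) : ℝ) := by
    have h2 : (n : ℝ) * q * Real.log (Real.Gamma x)
        ≤ ∑ i, q * Real.log (Real.Gamma ((k i : ℝ) / q + 1)) := by
      have := mul_le_mul_of_nonneg_left hjen (le_of_lt (by positivity : (0:ℝ) < n * q))
      calc (n : ℝ) * q * Real.log (Real.Gamma x)
          ≤ (n : ℝ) * q * ∑ i, (1 / (n : ℝ)) • ((Real.log ∘ Real.Gamma) ((k i : ℝ) / q + 1)) := this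
        _ = ∑ i, q * Real.log (Real.Gamma ((k i : ℝ) / q + 1)) := by
            rw [Finset.mul_sum]
            refine Finset.sum_congr rfl fun i _ => ?_
            simp only [smul_eq_mul, Function.comp]
            field_simp
    refine h2.trans ?_
    have h3 : ∀ i ∈ Finset.univ, q * Real.log (Real.Gamma ((k i : ℝ) / q + 1))
        ≤ Real.log (Nat.factorial (k i)) := fun i _ => q_log_gamma_le (k i) q hq
    refine (Finset.sum_le_sum h3).trans ?_
    rw [Nat.cast_prod, Real.log_prod]
    exact fun i _ => by exact_mod_cast (Nat.factorial_pos (k i)).ne'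
  have hprodpos : (0 : ℝ) < ((∏ i, Nat.factorial (k i) : ℕ) : ℝ) := by
    exact_mod_cast Finset.prod_pos fun i _ => Nat.factorial_pos (k i)
  rw [Real.rpow_def_of_pos hΓpos, mul_comm]
  calc Real.exp ((n : ℝ) * q * Real.log (Real.Gamma x))
      ≤ Real.exp (Real.log ((∏ i, Nat.factorial (k i) : ℕ) : ℝ)) := Real.exp_le_exp.2 hlog
    _ = ((∏ i, Nat.factorial (k i) : ℕ) : ℝ) := Real.exp_log hprodpos
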